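/- The Morse–Thue equation has a unique solution: there is exactly one boolean stream x satisfying x = 1 : merge(x, not(x)), where not is the entrywise negation and merge interleaves two streams. -/

import Mathlib

/-- The Thue–Morse-like sequence: f 0 = true, f (2k+1) = f k, f (2k+2) = !f k. -/
def tmAux : ℕ → Bool
  | 0 => true
  | (n+1) => if n % 2 = 0 then tmAux (n / 2) else !tmAux (n / 2)

/-- The Morse–Thue equation x = 1 : merge(x, not x) has a unique solution. -/
theorem stmt_10 (merge : Stream' Bool → Stream' Bool → Stream' Bool)
    (notS : Stream' Bool → Stream' Bool)
    (hmerge : ∀ x y : Stream' Bool,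
      (merge x y).head = x.head ∧ (merge x y).tail = merge y x.tail)
    (hnot : ∀ x : Stream' Bool, (notS x).head = !x.head ∧ (notS x).tail = notS x.tail) :
    ∃! x : Stream' Bool, x.head = true ∧ x.tail = merge x (notS x) := by
  -- key lemmas about merge and notS at the level of `get`
  have hnotget : ∀ n (x : Stream' Bool), (notS x).get n = !x.get n := by
    intro n
    induction n with
    | zero => intro x; exact (hnot x).1
    | succ n ih =>
      intro x
      have : (notS x).get (n+1) = (notS x).tail.get n := rfl
      rw [this, (hnot x).2, ih]
      rfl
  have hmget : ∀ n (x y : Stream' Bool),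
      (merge x y).get (2*n) = x.get n ∧ (merge x y).get (2*n+1) = y.get n := by
    intro n
    induction n with
    | zero => intro x y; exact ⟨(hmerge x y).1, by
        have : (merge x y).get 1 = (merge x y).tail.get 0 := rfl
        rw [this, (hmerge x y).2]; exact (hmerge y x.tail).1⟩
    | succ n ih =>
      intro x y
      have h1 : (merge x y).tail.tail = merge x.tail y.tail := by
        rw [(hmerge x y).2, (hmerge y x.tail).2]
      constructor
      · have : (merge x y).get (2*(n+1)) = (merge x y).tail.tail.get (2*n) := by
          have : 2*(n+1) = 2*n + 2 := by ring
          rw [this]; rfl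
        rw [this, h1, (ih x.tail y.tail).1]; rfl
      · have : (merge x y).get (2*(n+1)+1) = (merge x y).tail.tail.get (2*n+1) := by
          have : 2*(n+1)+1 = (2*n+1) + 2 := by ring
          rw [this]; rfl
        rw [this, h1, (ih x.tail y.tail).2]; rfl
  -- the recurrence satisfied by any solution
  have hrec : ∀ (x : Stream' Bool), x.head = true ∧ x.tail = merge x (notS x) →
      x.get 0 = true ∧ (∀ k, x.get (2*k+1) = x.get k) ∧ (∀ k, x.get (2*k+2) = !x.get k) := by
    rintro x ⟨h1, h2⟩
    refine ⟨h1, ?_, ?_⟩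
    · intro k
      have : x.get (2*k+1) = x.tail.get (2*k) := rfl
      rw [this, h2, (hmget k x (notS x)).1]
    · intro k
      have : x.get (2*k+2) = x.tail.get (2*k+1) := rfl
      rw [this, h2, (hmget k x (notS x)).2, hnotget]
  refine ⟨fun n => tmAux n, ⟨by simp [Stream'.head, Stream'.get, tmAux], ?_⟩, ?_⟩
  · funext n
    show tmAux (n+1) = (merge (fun n => tmAux n) (notS fun n => tmAux n)).get n
    rcases Nat.even_or_odd n with ⟨k, hk⟩ | ⟨k, hk⟩
    · rw [show n = 2*k by omega] at *
      refine Eq.trans ?_ (hmget k _ _).1.symm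
      show tmAux (2*k+1) = tmAux k
      simp [tmAux, Nat.mul_div_cancel_left, Nat.mul_mod_right]
    · rw [show n = 2*k+1 by omega] at *
      refine Eq.trans ?_ ((hmget k _ _).2.trans (hnotget _ _)).symm
      show tmAux (2*k+2) = !tmAux k
      have : (2*k+1) % 2 = 1 := by omega
      simp [tmAux, this]
      congr 1
      omega
  · intro y hy
    obtain ⟨hy0, hy1, hy2⟩ := hrec y hy
    funext n
    induction n using Nat.strong_induction_on with
    | _ n ih =>
      show y.get n = tmAux n
      match n with
      | 0 => simpa [tmAux] using hy0
      | (m+1) =>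
        rcases Nat.even_or_odd m with ⟨k, hk⟩ | ⟨k, hk⟩
        · have h : m + 1 = 2*k+1 := by omega
          have hik : y.get k = tmAux k := ih k (by omega)
          rw [h, hy1 k, hik]
          show tmAux k = tmAux (2*k+1)
          simp [tmAux, Nat.mul_div_cancel_left, Nat.mul_mod_right]
        · have h : m + 1 = 2*k+2 := by omega
          have hik : y.get k = tmAux k := ih k (by omega)
          rw [h, hy2 k, hik]
          show (!tmAux k) = tmAux (2*k+2)
          symm
          have h2 : (2*k+1) % 2 = 1 := by omega
          simp [tmAux, h2]
          congr 1
          omega
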